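/- arXiv:2012.07346 — 2 statements merged into one kernel-verified Lean document; each statement's English description precedes it below -/
import Mathlib

section
/- Let u_1,…,u_k be points in ℝ^d equipped with a norm ‖·‖ and fix γ with 0 < γ < 1/2. For each j ∈ {1,…,k} let Δ_j = inf{ r ≥ 0 : |{ l : ‖u_j − u_l‖ ≤ r }| ≥ k(γ + 1/2) }, and let u_⋆ be a point among u_1,…,u_k with smallest Δ_j (the smallest-ball selection). Then for every u ∈ ℝ^d, ‖u_⋆ − u‖ ≤ 3 · Δ(u;γ). -/
set_option autoImplicit false

open Finset

/-- `robustRadius u γ x` is Δ(x;γ): the radius of the smallest ball centered at `x`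
containing strictly more than `k(1/2+γ)` of the points `u 1,…,u k`. -/
noncomputable def robustRadius {E : Type*} [NormedAddCommGroup E] {k : ℕ}
    (u : Fin k → E) (γ : ℝ) (x : E) : ℝ :=
  sInf {r : ℝ | 0 ≤ r ∧
    (k : ℝ) * (1/2 + γ) < ((Finset.univ.filter (fun j => ‖u j - x‖ ≤ r)).card : ℝ)}

/-- `smallestBallRadius u γ j` is Δ_j: the radius of the smallest ball centered at `u j`
containing at least `k(γ+1/2)` of the points `u 1,…,u k`. -/
noncomputable def smallestBallRadius {E : Type*} [NormedAddCommGroup E] {k : ℕ}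
    (u : Fin k → E) (γ : ℝ) (j : Fin k) : ℝ :=
  sInf {r : ℝ | 0 ≤ r ∧
    (k : ℝ) * (γ + 1/2) ≤ ((Finset.univ.filter (fun l => ‖u j - u l‖ ≤ r)).card : ℝ)}

lemma countSet_closed {k : ℕ} (d : Fin k → ℝ) (m : ℕ) :
    IsClosed {r : ℝ | m ≤ (Finset.univ.filter (fun j => d j ≤ r)).card} := by
  have h : {r : ℝ | m ≤ (Finset.univ.filter (fun j => d j ≤ r)).card}
      = ⋃ s ∈ ((Finset.univ : Finset (Fin k)).powersetCard m),
          ⋂ j ∈ s, Set.Ici (d j) := by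
    ext r
    simp only [Set.mem_setOf_eq, Set.mem_iUnion, Finset.mem_powersetCard,
      Set.mem_iInter, Set.mem_Ici]
    constructor
    · intro h
      obtain ⟨s, hs, hcard⟩ := Finset.exists_subset_card_eq h
      exact ⟨s, ⟨hs.trans (Finset.filter_subset _ _), hcard⟩,
        fun j hj => (Finset.mem_filter.1 (hs hj)).2⟩
    · rintro ⟨s, ⟨-, hcard⟩, hall⟩
      calc m = s.card := hcard.symm
        _ ≤ _ := Finset.card_le_card
            (fun j hj => Finset.mem_filter.2 ⟨Finset.mem_univ _, hall j hj⟩)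
  rw [h]
  exact Set.Finite.isClosed_biUnion (Finset.finite_toSet _)
    (fun s _ => isClosed_biInter (fun j _ => isClosed_Ici))

lemma sInf_mem_countSet {k : ℕ} (hk : 0 < k) (d : Fin k → ℝ) (hd : ∀ j, 0 ≤ d j)
    (m : ℕ) (hm : m ≤ k) :
    sInf {r : ℝ | 0 ≤ r ∧ m ≤ (Finset.univ.filter (fun j => d j ≤ r)).card}
      ∈ {r : ℝ | 0 ≤ r ∧ m ≤ (Finset.univ.filter (fun j => d j ≤ r)).card} := by
  have hne : (Finset.univ : Finset (Fin k)).Nonempty := by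
    simpa [Finset.univ_nonempty_iff] using Fin.pos_iff_nonempty.1 hk
  set S := {r : ℝ | 0 ≤ r ∧ m ≤ (Finset.univ.filter (fun j => d j ≤ r)).card} with hS
  have hclosed : IsClosed S := by
    have : S = Set.Ici 0 ∩ {r : ℝ | m ≤ (Finset.univ.filter (fun j => d j ≤ r)).card} := by
      ext r; simp [hS, Set.mem_Ici, and_comm]
    rw [this]
    exact isClosed_Ici.inter (countSet_closed d m)
  have hnonempty : S.Nonempty := by
    refine ⟨Finset.univ.sup' hne d, ?_, ?_⟩
    · exact le_trans (hd hne.choose) (Finset.le_sup' d (Finset.mem_univ _))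
    · have : Finset.univ.filter (fun j => d j ≤ Finset.univ.sup' hne d)
          = (Finset.univ : Finset (Fin k)) := by
        apply Finset.filter_true_of_mem
        intro j _; exact Finset.le_sup' d (Finset.mem_univ _)
      rw [this, Finset.card_univ, Fintype.card_fin]; exact hm
  have hbdd : BddBelow S := ⟨0, fun r hr => hr.1⟩
  exact hclosed.csInf_mem hnonempty hbdd

/-- the smallest-ball selection `u star` (a point among `u 1,…,u k` with
smallest Δ_j) satisfies `‖u star − u‖ ≤ 3 Δ(u;γ)` for every `u` and `0 < γ < 1/2`. -/
theorem smallest_ball_robust_distance_approx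
    {E : Type*} [NormedAddCommGroup E] [NormedSpace ℝ E] [FiniteDimensional ℝ E]
    {k : ℕ} (u : Fin k → E) (γ : ℝ) (hγ0 : 0 < γ) (hγ1 : γ < 1/2)
    (star : Fin k)
    (hstar : ∀ j, smallestBallRadius u γ star ≤ smallestBallRadius u γ j)
    (x : E) :
    ‖u star - x‖ ≤ 3 * robustRadius u γ x := by
  have hk : 0 < k := star.pos
  have hk' : (0:ℝ) < k := Nat.cast_pos.2 hk
  set t : ℝ := (k:ℝ) * (1/2 + γ) with ht
  have ht0 : 0 ≤ t := by positivity
  have htk : t < (k:ℝ) := by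
    rw [ht]
    nlinarith
  set m1 : ℕ := ⌊t⌋₊ + 1 with hm1
  set m2 : ℕ := ⌈t⌉₊ with hm2
  have hm1k : m1 ≤ k := by
    rw [hm1, Nat.add_one_le_iff]
    exact (Nat.floor_lt ht0).2 (by exact_mod_cast htk)
  have hm2k : m2 ≤ k := Nat.ceil_le.2 (le_of_lt htk)
  -- rewrite the robustRadius defining set
  have hset1 : {r : ℝ | 0 ≤ r ∧ t < ((Finset.univ.filter (fun j => ‖u j - x‖ ≤ r)).card : ℝ)}
      = {r : ℝ | 0 ≤ r ∧ m1 ≤ (Finset.univ.filter (fun j => ‖u j - x‖ ≤ r)).card} := by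
    ext r
    simp only [Set.mem_setOf_eq, hm1, Nat.add_one_le_iff]
    rw [Nat.floor_lt ht0]
  -- rewrite the smallestBallRadius defining sets
  have hset2 : ∀ j : Fin k,
      {r : ℝ | 0 ≤ r ∧ (k:ℝ) * (γ + 1/2) ≤ ((Finset.univ.filter (fun l => ‖u j - u l‖ ≤ r)).card : ℝ)}
      = {r : ℝ | 0 ≤ r ∧ m2 ≤ (Finset.univ.filter (fun l => ‖u j - u l‖ ≤ r)).card} := by
    intro j
    ext r
    have : (k:ℝ) * (γ + 1/2) = t := by rw [ht]; ring
    simp only [Set.mem_setOf_eq, this, hm2, Nat.ceil_le]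
  set Δ := robustRadius u γ x with hΔ
  -- attainment for Δ
  have hΔmem : Δ ∈ {r : ℝ | 0 ≤ r ∧ m1 ≤ (Finset.univ.filter (fun j => ‖u j - x‖ ≤ r)).card} := by
    rw [hΔ, robustRadius, hset1]
    exact sInf_mem_countSet hk _ (fun j => norm_nonneg _) m1 hm1k
  obtain ⟨hΔ0, hScard⟩ := hΔmem
  set S := Finset.univ.filter (fun j => ‖u j - x‖ ≤ Δ) with hSdef
  -- S is nonempty
  have hSne : S.Nonempty := Finset.card_pos.1 (lt_of_lt_of_le (Nat.succ_pos _) hScard)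
  obtain ⟨j0, hj0⟩ := hSne
  have hj0' : ‖u j0 - x‖ ≤ Δ := (Finset.mem_filter.1 hj0).2
  -- smallestBallRadius at j0 is at most 2Δ
  have h2Δ : smallestBallRadius u γ j0 ≤ 2 * Δ := by
    rw [smallestBallRadius]
    apply csInf_le ⟨0, fun r hr => hr.1⟩
    refine ⟨by linarith, ?_⟩
    have hsub : S ⊆ Finset.univ.filter (fun l => ‖u j0 - u l‖ ≤ 2 * Δ) := by
      intro l hl
      have hl' : ‖u l - x‖ ≤ Δ := (Finset.mem_filter.1 hl).2
      refine Finset.mem_filter.2 ⟨Finset.mem_univ _, ?_⟩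
      calc ‖u j0 - u l‖ = ‖(u j0 - x) - (u l - x)‖ := by rw [sub_sub_sub_cancel_right]
        _ ≤ ‖u j0 - x‖ + ‖u l - x‖ := norm_sub_le _ _
        _ ≤ Δ + Δ := add_le_add hj0' hl'
        _ = 2 * Δ := by ring
    have hcard : S.card ≤ (Finset.univ.filter (fun l => ‖u j0 - u l‖ ≤ 2 * Δ)).card :=
      Finset.card_le_card hsub
    have : t < ((Finset.univ.filter (fun l => ‖u j0 - u l‖ ≤ 2 * Δ)).card : ℝ) := by
      have h1 : t < (S.card : ℝ) := by
        have : m1 ≤ S.card := hScard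
        have h2 : (m1:ℝ) ≤ (S.card:ℝ) := by exact_mod_cast this
        have h3 : t < (m1:ℝ) := by
          rw [hm1]
          push_cast
          exact lt_of_lt_of_le (Nat.lt_floor_add_one t) (by norm_num)
        linarith
      calc t < (S.card:ℝ) := h1
        _ ≤ _ := by exact_mod_cast hcard
    have : (k:ℝ) * (γ + 1/2) ≤ ((Finset.univ.filter (fun l => ‖u j0 - u l‖ ≤ 2 * Δ)).card : ℝ) := by
      have ht' : (k:ℝ) * (γ + 1/2) = t := by rw [ht]; ring
      linarith [this]
    exact this
  have hρ2Δ : smallestBallRadius u γ star ≤ 2 * Δ := le_trans (hstar j0) h2Δ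
  set ρ := smallestBallRadius u γ star with hρ
  -- attainment for ρ
  have hρmem : ρ ∈ {r : ℝ | 0 ≤ r ∧ m2 ≤ (Finset.univ.filter (fun l => ‖u star - u l‖ ≤ r)).card} := by
    rw [hρ, smallestBallRadius, hset2 star]
    exact sInf_mem_countSet hk _ (fun j => norm_nonneg _) m2 hm2k
  obtain ⟨hρ0, hTcard⟩ := hρmem
  set T := Finset.univ.filter (fun l => ‖u star - u l‖ ≤ ρ) with hTdef
  -- S and T intersect
  have hcards : (k:ℝ) < (S.card : ℝ) + (T.card : ℝ) := by
    have h1 : t < (S.card : ℝ) := by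
      have h2 : (m1:ℝ) ≤ (S.card:ℝ) := by exact_mod_cast hScard
      have h3 : t < (m1:ℝ) := by
        rw [hm1]; push_cast
        exact lt_of_lt_of_le (Nat.lt_floor_add_one t) (by norm_num)
      linarith
    have h2 : t ≤ (T.card : ℝ) := by
      have : (m2:ℝ) ≤ (T.card:ℝ) := by exact_mod_cast hTcard
      exact le_trans (Nat.le_ceil t) this
    have : (k:ℝ) < t + t := by rw [ht]; nlinarith
    linarith
  have hint : (S ∩ T).Nonempty := by
    rw [← Finset.card_pos]
    by_contra h
    push_neg at h
    have h0 : (S ∩ T).card = 0 := Nat.le_zero.1 h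
    have huni : (S ∪ T).card ≤ k := by
      calc (S ∪ T).card ≤ (Finset.univ : Finset (Fin k)).card := Finset.card_le_card (Finset.subset_univ _)
        _ = k := by rw [Finset.card_univ, Fintype.card_fin]
    have heq : (S ∪ T).card + (S ∩ T).card = S.card + T.card := Finset.card_union_add_card_inter S T
    have : S.card + T.card ≤ k := by omega
    have : (S.card : ℝ) + (T.card : ℝ) ≤ (k:ℝ) := by exact_mod_cast this
    linarith
  obtain ⟨l, hl⟩ := hint
  have hlS : ‖u l - x‖ ≤ Δ := (Finset.mem_filter.1 (Finset.mem_of_mem_inter_left hl)).2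
  have hlT : ‖u star - u l‖ ≤ ρ := (Finset.mem_filter.1 (Finset.mem_of_mem_inter_right hl)).2
  calc ‖u star - x‖ = ‖(u star - u l) + (u l - x)‖ := by rw [sub_add_sub_cancel]
    _ ≤ ‖u star - u l‖ + ‖u l - x‖ := norm_add_le _ _
    _ ≤ ρ + Δ := add_le_add hlT hlS
    _ ≤ 2 * Δ + Δ := by linarith
    _ = 3 * Δ := by ring
end

section
/- Let U_1,…,U_n be i.i.d. real-valued random variables with mean μ and variance σ² < ∞. Fix δ ∈ (0,1), set k = ⌈log(1/δ)⌉, and suppose n ≥ 2(1 + log(1/δ)). Partition {1,…,n} into k disjoint blocks I_1,…,I_k each of size at least ⌊n/k⌋, let û_j be the average of {U_i : i ∈ I_j} for each j, and let θ̂ = median{û_1,…,û_k}. Then P{ |θ̂ − μ| > 2√2·e·√( (1 + log(1/δ)) σ² / n ) } ≤ δ, where e is Euler's number. -/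
set_option autoImplicit false
set_option maxHeartbeats 1000000

open Finset MeasureTheory ProbabilityTheory

/-- deviation bound for the median-of-means estimator.  `U 1,…,U n` are
i.i.d. with mean `m` and variance `σ2`, `k = ⌈log(1/δ)⌉`, `n ≥ 2(1+log(1/δ))`, the index
set is partitioned into `k` disjoint blocks `I j` of size at least `⌊n/k⌋`, and `θhat` is
a median of the block means.  Then `P{|θhat − m| > 2√2·e·√((1+log(1/δ))σ²/n)} ≤ δ`. -/
theorem median_of_means_deviation
    {Ω : Type*} [MeasurableSpace Ω] (μ : Measure Ω) [IsProbabilityMeasure μ]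
    {n : ℕ} (U : Fin n → Ω → ℝ)
    (hmeas : ∀ i, Measurable (U i))
    (hindep : iIndepFun U μ)
    (hident : ∀ i j, IdentDistrib (U i) (U j) μ μ)
    (m σ2 : ℝ) (hσ2 : 0 ≤ σ2)
    (hint : ∀ i, Integrable (U i) μ)
    (hmean : ∀ i, ∫ ω, U i ω ∂μ = m)
    (hint2 : ∀ i, Integrable (fun ω => (U i ω - m)^2) μ)
    (hvar : ∀ i, ∫ ω, (U i ω - m)^2 ∂μ = σ2)
    (δ : ℝ) (hδ : δ ∈ Set.Ioo (0:ℝ) 1)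
    (k : ℕ) (hk : k = ⌈Real.log (1/δ)⌉₊)
    (hn : 2 * (1 + Real.log (1/δ)) ≤ (n : ℝ))
    (I : Fin k → Finset (Fin n))
    (hdisj : ∀ j l, j ≠ l → Disjoint (I j) (I l))
    (hcover : ∀ i : Fin n, ∃ j, i ∈ I j)
    (hsize : ∀ j, n / k ≤ (I j).card)
    (θhat : Ω → ℝ)
    (hmed : ∀ ω,
      (k + 1) / 2 ≤ (Finset.univ.filter
        (fun j => ((I j).card : ℝ)⁻¹ * ∑ i ∈ I j, U i ω ≤ θhat ω)).card ∧
      (k + 1) / 2 ≤ (Finset.univ.filter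
        (fun j => θhat ω ≤ ((I j).card : ℝ)⁻¹ * ∑ i ∈ I j, U i ω)).card) :
    μ {ω | 2 * Real.sqrt 2 * Real.exp 1 *
        Real.sqrt ((1 + Real.log (1/δ)) * σ2 / n) < |θhat ω - m|} ≤
      ENNReal.ofReal δ := by
  classical
  obtain ⟨hδ0, hδ1⟩ := hδ
  set L : ℝ := Real.log (1/δ) with hLdef
  set e : ℝ := Real.exp 1 with hedef
  have he0 : 0 < e := Real.exp_pos 1
  have he1 : 1 ≤ e := by have := Real.add_one_le_exp 1; rw [← hedef] at this; linarith
  have hL : 0 < L := Real.log_pos (by rw [lt_div_iff₀ hδ0]; linarith)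
  have hk1 : 0 < k := hk ▸ Nat.ceil_pos.2 hL
  have hk0R : 0 < (k:ℝ) := by exact_mod_cast hk1
  have hLk : L ≤ (k:ℝ) := hk ▸ Nat.le_ceil L
  have hkL : (k:ℝ) < L + 1 := by rw [hk]; exact Nat.ceil_lt_add_one hL.le
  have hn0 : 0 < (n:ℝ) := lt_of_lt_of_le (by linarith) hn
  have h2k : 2*(k:ℝ) < n := by linarith
  have h2kn : 2*k ≤ n := by exact_mod_cast h2k.le
  set ε : ℝ := 2 * Real.sqrt 2 * e * Real.sqrt ((1 + L) * σ2 / n) with hεdef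
  have hε0 : 0 ≤ ε := by positivity
  have hε2 : ε^2 = 8 * e^2 * ((1+L) * σ2 / n) := by
    have h1 : (Real.sqrt 2)^2 = 2 := Real.sq_sqrt (by norm_num)
    have h2 : (Real.sqrt ((1+L)*σ2/n))^2 = (1+L)*σ2/n := by
      apply Real.sq_sqrt; positivity
    calc ε^2 = 2^2 * (Real.sqrt 2)^2 * e^2 * (Real.sqrt ((1+L)*σ2/n))^2 := by ring
    _ = 8 * e^2 * ((1+L) * σ2 / n) := by rw [h1, h2]; ring
  set ub : Fin k → Ω → ℝ := fun j ω => ((I j).card : ℝ)⁻¹ * ∑ i ∈ I j, U i ω with hubdef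
  have hubmeas : ∀ j, Measurable (ub j) :=
    fun j => (Finset.measurable_sum _ (fun i _ => hmeas i)).const_mul _
  set A : Fin k → Set Ω := fun j => {ω | ε < |ub j ω - m|} with hAdef
  have hAmeas : ∀ j, MeasurableSet (A j) :=
    fun j => measurableSet_lt measurable_const (((hubmeas j).sub measurable_const).abs)
  -- block sizes
  have hcard2 : ∀ j, 2 ≤ (I j).card := fun j =>
    le_trans ((Nat.le_div_iff_mul_le hk1).2 h2kn) (hsize j)
  have hcard0 : ∀ j, 0 < ((I j).card : ℝ) := fun j => by
    have := hcard2 j; positivity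
  have hcardR : ∀ j, (n:ℝ)/(2*k) ≤ ((I j).card:ℝ) := by
    intro j
    have hq : ((n/k : ℕ):ℝ) ≤ ((I j).card:ℝ) := by exact_mod_cast hsize j
    have hmod : (n:ℝ) = k * ((n/k:ℕ):ℝ) + ((n % k : ℕ):ℝ) := by
      exact_mod_cast (Nat.div_add_mod n k).symm
    have hmlt : ((n % k : ℕ):ℝ) < k := by exact_mod_cast Nat.mod_lt n hk1
    rw [div_le_iff₀ (by positivity)]
    nlinarith [hq, hmod, hmlt, hk0R, h2k, mul_le_mul_of_nonneg_left hq (le_of_lt hk0R)]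
  -- L² membership and variances
  have hU2 : ∀ i, MemLp (U i) 2 μ := by
    intro i
    have h1 : MemLp (fun ω => U i ω - m) 2 μ :=
      (memLp_two_iff_integrable_sq
        (((hmeas i).sub measurable_const).aestronglyMeasurable)).2 (hint2 i)
    have h2 := h1.add (memLp_const m)
    have h3 : ((fun ω => U i ω - m) + fun _ => m) = U i := by funext ω; simp
    rwa [h3] at h2
  have hvarU : ∀ i, variance (U i) μ = σ2 := by
    intro i
    rw [variance_eq_integral (hmeas i).aemeasurable]
    change ∫ ω, ((U i - fun _ => ∫ x, U i x ∂μ) ^ 2 : Ω → ℝ) ω ∂μ = σ2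
    have h3 : ((U i - fun _ => ∫ x, U i x ∂μ) ^ 2) = fun ω => (U i ω - m)^2 := by
      funext ω; simp [hmean i]
    rw [h3, hvar i]
  have hU2s : ∀ j, MemLp (fun ω => ∑ i ∈ I j, U i ω) 2 μ := by
    intro j
    have := memLp_finset_sum' (I j) (fun i (_ : i ∈ I j) => hU2 i) (μ := μ) (p := 2)
    have h4 : (∑ i ∈ I j, U i) = fun ω => ∑ i ∈ I j, U i ω := by
      funext ω; simp
    rwa [h4] at this
  have hℒub : ∀ j, MemLp (ub j) 2 μ := fun j => (hU2s j).const_mul _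
  have hmeanub : ∀ j, ∫ ω, ub j ω ∂μ = m := by
    intro j
    rw [hubdef]
    simp only
    rw [integral_const_mul, integral_finset_sum _ (fun i _ => hint i)]
    simp only [hmean]
    rw [Finset.sum_const, nsmul_eq_mul]
    rw [← mul_assoc, inv_mul_cancel₀ (ne_of_gt (hcard0 j)), one_mul]
  have hvarub : ∀ j, variance (ub j) μ = σ2 / (I j).card := by
    intro j
    have hsum : variance (fun ω => ∑ i ∈ I j, U i ω) μ = (I j).card * σ2 := by
      have h4 : (fun ω => ∑ i ∈ I j, U i ω) = ∑ i ∈ I j, U i := by funext ω; simp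
      rw [h4, IndepFun.variance_sum (fun i _ => hU2 i)
        (fun a _ b _ hab => hindep.indepFun hab)]
      simp [hvarU, Finset.sum_const, nsmul_eq_mul]
    have := variance_const_mul (((I j).card : ℝ)⁻¹) (fun ω => ∑ i ∈ I j, U i ω) μ
    rw [hubdef]
    simp only
    rw [this, hsum]
    have hne : ((I j).card : ℝ) ≠ 0 := ne_of_gt (hcard0 j)
    field_simp
  -- per-block deviation probability
  set q : ℝ := 1/(4 * e^2) with hqdef
  have hq0 : 0 < q := by positivity
  have hq1 : q ≤ 1 := by
    rw [hqdef, div_le_one (by positivity)]; nlinarith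
  have hA : ∀ j, μ (A j) ≤ ENNReal.ofReal q := by
    intro j
    rcases eq_or_lt_of_le hσ2 with hσ | hσ
    · -- σ2 = 0
      have hvar0 : variance (ub j) μ = 0 := by rw [hvarub j, ← hσ]; simp
      have hev : evariance (ub j) μ = 0 := by
        rw [← ofReal_variance (hℒub j), hvar0]; simp
      have hae := (evariance_eq_zero_iff (hubmeas j).aemeasurable).1 hev
      have hnull : μ {ω | ¬ (ub j ω = ∫ x, ub j x ∂μ)} = 0 := by
        rw [← ae_iff]; exact hae
      have hsub : A j ⊆ {ω | ¬ (ub j ω = ∫ x, ub j x ∂μ)} := by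
        intro ω hω
        simp only [hAdef, Set.mem_setOf_eq] at hω ⊢
        rw [hmeanub j]
        intro hc
        rw [hc] at hω
        simp at hω
        linarith
      have := measure_mono_null hsub hnull
      rw [this]; exact bot_le
    · -- σ2 > 0
      have hx : 0 < (1+L)*σ2/n := by
        apply div_pos (mul_pos (by linarith) hσ) hn0
      have hε : 0 < ε := by
        apply mul_pos (mul_pos (by positivity) he0) (Real.sqrt_pos.2 hx)
      have cheb := meas_ge_le_variance_div_sq (hℒub j) hε
      have hsub : A j ⊆ {ω | ε ≤ |ub j ω - ∫ x, ub j x ∂μ|} := by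
        intro ω hω
        simp only [hAdef, Set.mem_setOf_eq] at hω ⊢
        rw [hmeanub j]; exact hω.le
      refine le_trans (le_trans (measure_mono hsub) cheb) (ENNReal.ofReal_le_ofReal ?_)
      rw [hvarub j]
      have hcj := hcardR j
      have hc0 := hcard0 j
      have hεn : ε^2 * n = 8*e^2*(1+L)*σ2 := by
        rw [hε2]; field_simp
      have key : (n:ℝ) ≤ 2*(1+L)*((I j).card) := by
        have hk' : (k:ℝ) ≤ 1 + L := by linarith
        have h5 : 2*(1+L)*((n:ℝ)/(2*k)) ≤ 2*(1+L)*((I j).card:ℝ) :=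
          mul_le_mul_of_nonneg_left hcj (by linarith)
        have h6 : (n:ℝ) ≤ 2*(1+L)*((n:ℝ)/(2*k)) := by
          rw [mul_div_assoc']
          rw [le_div_iff₀ (by positivity)]
          nlinarith [hn0.le, hk']
        linarith
      have h7 : 4*e^2*σ2*(n:ℝ) ≤ ((I j).card:ℝ)*ε^2*(n:ℝ) := by
        calc 4*e^2*σ2*(n:ℝ) ≤ 4*e^2*σ2*(2*(1+L)*((I j).card:ℝ)) := by
              apply mul_le_mul_of_nonneg_left key
              positivity
        _ = ((I j).card:ℝ)*(8*e^2*(1+L)*σ2) := by ring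
        _ = ((I j).card:ℝ)*(ε^2*n) := by rw [hεn]
        _ = ((I j).card:ℝ)*ε^2*(n:ℝ) := by ring
      have h8 : 4*e^2*σ2 ≤ ((I j).card:ℝ)*ε^2 := le_of_mul_le_mul_right h7 hn0
      rw [div_div, div_le_div_iff₀ (by positivity) (by positivity)]
      linarith
  -- independence: product formula over blocks
  set B : Set ℝ := {y | ε < |y - m|} with hBdef
  have hBmeas : MeasurableSet B :=
    measurableSet_lt measurable_const ((measurable_id.sub measurable_const).abs)
  have hprod : ∀ S : Finset (Fin k), μ (⋂ j ∈ S, A j) = ∏ j ∈ S, μ (A j) := by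
    intro S
    induction S using Finset.induction_on with
    | empty => simp
    | @insert j T hjT ih =>
      rw [Finset.set_biInter_insert, Finset.prod_insert hjT, ← ih]
      have hdisj' : Disjoint (I j) (T.biUnion I) :=
        (Finset.disjoint_biUnion_right _ _ _).2
          (fun l hl => hdisj j l (fun h => hjT (h ▸ hl)))
      have hIndep := hindep.indepFun_finset (I j) (T.biUnion I) hdisj' hmeas
      set g : (↥(I j) → ℝ) → ℝ := fun x => ((I j).card : ℝ)⁻¹ * ∑ i, x i with hgdef
      have hg : Measurable g :=
        (Finset.measurable_sum _ (fun i _ => measurable_pi_apply i)).const_mul _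
      set ψ : (↥(T.biUnion I) → ℝ) → (↥T → ℝ) := fun x l =>
        ((I l.1).card : ℝ)⁻¹ * ∑ i ∈ (I l.1).attach,
          x ⟨i.1, Finset.mem_biUnion.2 ⟨l.1, l.2, i.2⟩⟩ with hψdef
      have hψ : Measurable ψ := by
        apply measurable_pi_lambda
        intro l
        simp only [hψdef]
        apply Measurable.const_mul
        exact Finset.measurable_sum _ (fun i _ => measurable_pi_apply _)
      have hcomp := (hIndep.comp hg hψ)
      have hgeq : (g ∘ fun ω (i : ↥(I j)) => U i.1 ω) = ub j := by
        funext ω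
        simp only [Function.comp_apply, hgdef, hubdef]
        congr 1
        exact Finset.sum_coe_sort (I j) (fun i => U i ω)
      have hψeq : (ψ ∘ fun ω (i : ↥(T.biUnion I)) => U i.1 ω)
          = fun ω (l : ↥T) => ub l.1 ω := by
        funext ω l
        simp only [Function.comp_apply, hψdef, hubdef]
        congr 1
        exact Finset.sum_attach (I l.1) (fun i => U i ω)
      rw [hgeq, hψeq] at hcomp
      set C : Set (↥T → ℝ) := {x | ∀ l, x l ∈ B} with hCdef
      have hCmeas : MeasurableSet C := by
        have : C = ⋂ l, (fun x : ↥T → ℝ => x l) ⁻¹' B := by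
          ext x; simp [hCdef]
        rw [this]
        exact MeasurableSet.iInter (fun l => (measurable_pi_apply l) hBmeas)
      have hAj : A j = ub j ⁻¹' B := rfl
      have hTeq : (⋂ l ∈ T, A l) = (fun ω (l : ↥T) => ub l.1 ω) ⁻¹' C := by
        ext ω
        simp only [Set.mem_iInter, Set.mem_preimage, hCdef, Set.mem_setOf_eq, hBdef,
          hAdef, Subtype.forall]
      rw [hAj, hTeq]
      exact hcomp.measure_inter_preimage_eq_mul B C hBmeas hCmeas
  -- counting: deviation of the median forces many block deviations
  set r : ℕ := (k + 1) / 2 with hrdef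
  have hrk : r ≤ k := by omega
  have hsubset : {ω | ε < |θhat ω - m|} ⊆
      ⋃ S ∈ Finset.univ.powersetCard r, ⋂ j ∈ S, A j := by
    intro ω hω
    simp only [Set.mem_setOf_eq] at hω
    have key : r ≤ (Finset.univ.filter (fun j => ε < |ub j ω - m|)).card := by
      rcases lt_abs.1 hω with h | h
      · refine le_trans (hmed ω).2 (Finset.card_le_card ?_)
        intro j hj
        simp only [Finset.mem_filter, Finset.mem_univ, true_and] at hj ⊢
        have h1 : θhat ω ≤ ub j ω := hj
        have : ε < ub j ω - m := by linarith
        exact lt_of_lt_of_le this (le_abs_self _)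
      · refine le_trans (hmed ω).1 (Finset.card_le_card ?_)
        intro j hj
        simp only [Finset.mem_filter, Finset.mem_univ, true_and] at hj ⊢
        have h1 : ub j ω ≤ θhat ω := hj
        have : ε < -(ub j ω - m) := by linarith
        exact lt_of_lt_of_le this (neg_le_abs _)
    obtain ⟨t, hts, htc⟩ := Finset.exists_subset_card_eq key
    refine Set.mem_iUnion₂.2 ⟨t, ?_, ?_⟩
    · exact Finset.mem_powersetCard.2 ⟨Finset.subset_univ t, htc⟩
    · exact Set.mem_iInter₂.2 (fun j hj => (Finset.mem_filter.1 (hts hj)).2)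
  -- final computation
  have hrhalf : (k:ℝ)/2 ≤ (r:ℝ) := by
    have : k ≤ 2 * r := by omega
    have h := (Nat.cast_le (α := ℝ)).2 this
    push_cast at h
    linarith
  have hreal : ((k.choose r : ℕ):ℝ) * q^r ≤ δ := by
    have hchoose : ((k.choose r : ℕ):ℝ) ≤ 2^k := by
      have h1 : k.choose r ≤ 2^k := by
        calc k.choose r ≤ ∑ i ∈ Finset.range (k+1), k.choose i :=
              Finset.single_le_sum (fun i _ => Nat.zero_le _)
                (Finset.mem_range.2 (by omega))
        _ = 2^k := Nat.sum_range_choose k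
      exact_mod_cast h1
    have hqr : q^r ≤ q ^ ((k:ℝ)/2) := by
      rw [← Real.rpow_natCast q r]
      exact Real.rpow_le_rpow_of_exponent_ge hq0 hq1 hrhalf
    have hmain : (2:ℝ)^k * q ^ ((k:ℝ)/2) = Real.exp (-(k:ℝ)) := by
      have h4 : (2:ℝ)^k = (4:ℝ) ^ ((k:ℝ)/2) := by
        rw [show (4:ℝ) = (2:ℝ)^(2:ℝ) by
          rw [show ((2:ℝ):ℝ) = ((2:ℕ):ℝ) by norm_num, Real.rpow_natCast]; norm_num]
        rw [← Real.rpow_natCast (2:ℝ) k, ← Real.rpow_mul (by norm_num)]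
        congr 1; ring
      rw [h4, ← Real.mul_rpow (by norm_num) hq0.le]
      have h5 : (4:ℝ) * q = Real.exp (-2) := by
        rw [hqdef, hedef]
        rw [show Real.exp 1 ^ 2 = Real.exp 2 by
          have := Real.exp_one_pow 2; push_cast at this; exact this]
        rw [Real.exp_neg]
        field_simp
      rw [h5, ← Real.exp_mul]
      congr 1; ring
    have hexp : Real.exp (-(k:ℝ)) ≤ δ := by
      have h6 : Real.exp (-(k:ℝ)) ≤ Real.exp (-L) :=
        Real.exp_le_exp.2 (by linarith)
      have h7 : Real.exp (-L) = δ := by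
        rw [hLdef, one_div, Real.log_inv, neg_neg, Real.exp_log hδ0]
      linarith
    calc ((k.choose r : ℕ):ℝ) * q^r ≤ 2^k * q^((k:ℝ)/2) := by
          apply mul_le_mul hchoose hqr (by positivity) (by positivity)
    _ = Real.exp (-(k:ℝ)) := hmain
    _ ≤ δ := hexp
  calc μ {ω | ε < |θhat ω - m|}
      ≤ μ (⋃ S ∈ Finset.univ.powersetCard r, ⋂ j ∈ S, A j) := measure_mono hsubset
    _ ≤ ∑ S ∈ Finset.univ.powersetCard r, μ (⋂ j ∈ S, A j) :=
        measure_biUnion_finset_le _ _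
    _ = ∑ S ∈ Finset.univ.powersetCard r, ∏ j ∈ S, μ (A j) :=
        Finset.sum_congr rfl (fun S _ => hprod S)
    _ ≤ ∑ S ∈ Finset.univ.powersetCard r, ENNReal.ofReal q ^ r := by
        apply Finset.sum_le_sum
        intro S hS
        have hc : S.card = r := (Finset.mem_powersetCard.1 hS).2
        calc ∏ j ∈ S, μ (A j) ≤ ∏ _j ∈ S, ENNReal.ofReal q :=
              Finset.prod_le_prod' (fun j _ => hA j)
        _ = ENNReal.ofReal q ^ r := by rw [Finset.prod_const, hc]
    _ = (k.choose r : ℕ) * ENNReal.ofReal q ^ r := by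
        rw [Finset.sum_const, Finset.card_powersetCard, Finset.card_univ,
          Fintype.card_fin, nsmul_eq_mul]
    _ = ENNReal.ofReal (((k.choose r : ℕ):ℝ) * q^r) := by
        rw [ENNReal.ofReal_mul (by positivity), ENNReal.ofReal_natCast,
          ENNReal.ofReal_pow hq0.le]
    _ ≤ ENNReal.ofReal δ := ENNReal.ofReal_le_ofReal hreal
end
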